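/- Fix W diagonal on V vertices with eigenvalues 0 = W_m < W_{u₁} ≤ … ≤ W_{u_{V−1}}. Define Θ(x) = Σ_u (W_u + x)^{−1} − 1 for x > 0, and let X > 0 be its unique zero. Then for every x > 0, |x − X| ≤ (W_{u_{V−1}} + x)·|Θ(x)|. -/

import Mathlib

/-- With `Θ(x) = Σ_u (W_u + x)⁻¹ − 1` for a potential `W` on `V`
vertices having `0 = W m < W u` for `u ≠ m`, and `X > 0` the unique zero of `Θ`,
every `x > 0` satisfies `|x − X| ≤ (W_max + x)·|Θ(x)|`. -/
theorem theta_root_bound {V : ℕ} (hV : 2 ≤ V) (W : Fin V → ℝ) (m : Fin V)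
    (hWm : W m = 0) (hmin : ∀ u : Fin V, u ≠ m → 0 < W u)
    (X : ℝ) (hX : 0 < X) (hroot : ∑ u : Fin V, (W u + X)⁻¹ = 1)
    (x : ℝ) (hx : 0 < x) :
    |x - X| ≤
      (Finset.univ.sup' ⟨m, Finset.mem_univ m⟩ W + x) * |∑ u : Fin V, (W u + x)⁻¹ - 1| := by
  set M : ℝ := Finset.univ.sup' ⟨m, Finset.mem_univ m⟩ W with hM
  have hWnn : ∀ u : Fin V, 0 ≤ W u := by
    intro u
    by_cases h : u = m
    · simp [h, hWm]
    · exact (hmin u h).le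
  have hMW : ∀ u : Fin V, W u ≤ M := fun u => Finset.le_sup' W (Finset.mem_univ u)
  have hMx : 0 < M + x := by
    have := (hWnn m).trans (hMW m); linarith
  have hux : ∀ u : Fin V, 0 < W u + x := fun u => by have := hWnn u; linarith
  have huX : ∀ u : Fin V, 0 < W u + X := fun u => by have := hWnn u; linarith
  set S : ℝ := ∑ u : Fin V, ((W u + x) * (W u + X))⁻¹ with hS
  have hSnn : 0 ≤ S :=
    Finset.sum_nonneg fun u _ => inv_nonneg.2 (mul_pos (hux u) (huX u)).le
  have hkey : ∑ u : Fin V, (W u + x)⁻¹ - 1 = (X - x) * S := by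
    rw [← hroot, hS, Finset.mul_sum, ← Finset.sum_sub_distrib]
    refine Finset.sum_congr rfl fun u _ => ?_
    have h1 := (hux u).ne'
    have h2 := (huX u).ne'
    field_simp
    ring
  have hone : 1 ≤ (M + x) * S := by
    rw [← hroot, hS, Finset.mul_sum]
    refine Finset.sum_le_sum fun u _ => ?_
    have h1 : 1 ≤ (M + x) * (W u + x)⁻¹ := by
      rw [← div_eq_mul_inv, le_div_iff₀ (hux u), one_mul]
      linarith [hMW u]
    calc (W u + X)⁻¹ = 1 * (W u + X)⁻¹ := (one_mul _).symm
      _ ≤ (M + x) * (W u + x)⁻¹ * (W u + X)⁻¹ :=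
          mul_le_mul_of_nonneg_right h1 (inv_nonneg.2 (huX u).le)
      _ = (M + x) * ((W u + x) * (W u + X))⁻¹ := by rw [mul_inv, mul_assoc]
  calc |x - X| = |x - X| * 1 := (mul_one _).symm
    _ ≤ |x - X| * ((M + x) * S) := mul_le_mul_of_nonneg_left hone (abs_nonneg _)
    _ = (M + x) * |(X - x) * S| := by
        rw [abs_mul, abs_of_nonneg hSnn, abs_sub_comm]; ring
    _ = (M + x) * |∑ u : Fin V, (W u + x)⁻¹ - 1| := by rw [hkey]
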